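/- Combining the two directions of the reduction: a d-regular graph G (with d ≥ k) contains a k-clique if and only if the subdivided instance G' (with q = 1, p = d − (k−1)/2 + ε, 0 < ε < 1/k²) admits a seed set S of size at most k with π(S) > 0. -/

import Mathlib

/-- One step of exposure: `b` hears about the product from `a`,
which requires `a` to be adjacent to `b` and `a` to be accepting. -/
def step {V : Type*} (G : SimpleGraph V) (acc : V → Prop) (a b : V) : Prop :=
  G.Adj a b ∧ acc a

/-- `reach G acc i j`: there is a path from `i` to `j` all of whose
nodes other than possibly `j` are accepting. -/
def reach {V : Type*} (G : SimpleGraph V) (acc : V → Prop) : V → V → Prop :=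
  Relation.ReflTransGen (step G acc)

/-- `V(S)`: the set of nodes exposed to the product when `S` is seeded. -/
def exposedSet {V : Type*} (G : SimpleGraph V) (acc : V → Prop) (S : Set V) : Set V :=
  {j | ∃ i ∈ S, reach G acc i j}

/-- `V^+(S)`: exposed accepting nodes. -/
def Vpos {V : Type*} (G : SimpleGraph V) (acc : V → Prop) (S : Set V) : Set V :=
  {j | j ∈ exposedSet G acc S ∧ acc j}

/-- `V^-(S)`: exposed rejecting nodes. -/
def Vneg {V : Type*} (G : SimpleGraph V) (acc : V → Prop) (S : Set V) : Set V :=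
  {j | j ∈ exposedSet G acc S ∧ ¬ acc j}

/-- Payoff `π(S) = p|V^+(S)| - q|V^-(S)|`. -/
noncomputable def payoff {V : Type*} (p q : ℝ) (G : SimpleGraph V) (acc : V → Prop)
    (S : Set V) : ℝ :=
  p * (Vpos G acc S).ncard - q * (Vneg G acc S).ncard

/-- The graph `G'` obtained from `G` by subdividing every edge: its nodes are
the original nodes (`Sum.inl v`) and one subdivision node per edge
(`Sum.inr e`), with `Sum.inl v` adjacent to `Sum.inr e` iff `v` is an
endpoint of `e`. -/
def subdiv {V : Type*} (G : SimpleGraph V) : SimpleGraph (V ⊕ G.edgeSet) where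
  Adj x y :=
    (∃ (v : V) (e : G.edgeSet), x = Sum.inl v ∧ y = Sum.inr e ∧ v ∈ (e : Sym2 V)) ∨
    (∃ (v : V) (e : G.edgeSet), y = Sum.inl v ∧ x = Sum.inr e ∧ v ∈ (e : Sym2 V))
  symm := by
    constructor
    rintro x y (h | h)
    · exact Or.inr h
    · exact Or.inl h
  loopless := by
    constructor
    rintro x (⟨v, e, h1, h2, _⟩ | ⟨v, e, h1, h2, _⟩) <;> subst h1 <;> simp at h2

/-- In `G'`, original nodes are accepting and subdivision nodes are rejecting. -/
def subdivAcc {V : Type*} (G : SimpleGraph V) : V ⊕ G.edgeSet → Prop :=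
  fun x => x.isLeft = true


section Aux

open Finset

variable {V : Type*} [Fintype V] [DecidableEq V] (G : SimpleGraph V) [DecidableRel G.Adj]

lemma reach_subdiv_inl (v : V) (x : V ⊕ G.edgeSet) :
    reach (subdiv G) (subdivAcc G) (Sum.inl v) x ↔
      x = Sum.inl v ∨ ∃ e : G.edgeSet, x = Sum.inr e ∧ v ∈ (e : Sym2 V) := by
  constructor
  · intro h
    induction h with
    | refl => exact Or.inl rfl
    | tail hab hstep ih =>
      obtain ⟨hadj, hacc⟩ := hstep
      rcases ih with hb | ⟨e, hb, hve⟩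
      · subst hb
        rcases hadj with ⟨w, e, h1, h2, h3⟩ | ⟨w, e, h1, h2, h3⟩
        · obtain rfl : w = v := by injection h1 with h; exact h.symm
          exact Or.inr ⟨e, h2, h3⟩
        · simp at h2
      · subst hb
        simp [subdivAcc] at hacc
  · rintro (rfl | ⟨e, rfl, hve⟩)
    · exact Relation.ReflTransGen.refl
    · exact Relation.ReflTransGen.single ⟨Or.inl ⟨v, e, rfl, rfl, hve⟩, rfl⟩

lemma Vpos_subdiv (S : Finset V) :
    Vpos (subdiv G) (subdivAcc G) (Sum.inl '' (S : Set V)) = Sum.inl '' (S : Set V) := by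
  ext x
  simp only [Vpos, exposedSet, Set.mem_setOf_eq, Set.mem_image, Finset.mem_coe]
  constructor
  · rintro ⟨⟨i, ⟨v, hv, rfl⟩, hreach⟩, hacc⟩
    rcases (reach_subdiv_inl G v x).1 hreach with rfl | ⟨e, rfl, _⟩
    · exact ⟨v, hv, rfl⟩
    · simp [subdivAcc] at hacc
  · rintro ⟨v, hv, rfl⟩
    exact ⟨⟨Sum.inl v, ⟨v, hv, rfl⟩, Relation.ReflTransGen.refl⟩, rfl⟩

lemma Vneg_subdiv (S : Finset V) :
    Vneg (subdiv G) (subdivAcc G) (Sum.inl '' (S : Set V)) =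
      Sum.inr '' {e : G.edgeSet | ∃ v ∈ S, v ∈ (e : Sym2 V)} := by
  ext x
  simp only [Vneg, exposedSet, Set.mem_setOf_eq, Set.mem_image, Finset.mem_coe]
  constructor
  · rintro ⟨⟨i, ⟨v, hv, rfl⟩, hreach⟩, hacc⟩
    rcases (reach_subdiv_inl G v x).1 hreach with rfl | ⟨e, rfl, hve⟩
    · exact absurd rfl hacc
    · exact ⟨e, ⟨v, hv, hve⟩, rfl⟩
  · rintro ⟨e, ⟨v, hv, hve⟩, rfl⟩
    refine ⟨⟨Sum.inl v, ⟨v, hv, rfl⟩, ?_⟩, by simp [subdivAcc]⟩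
    exact Relation.ReflTransGen.single ⟨Or.inl ⟨v, e, rfl, rfl, hve⟩, rfl⟩

lemma payoff_subdiv (p : ℝ) (S : Finset V) :
    payoff p 1 (subdiv G) (subdivAcc G) (Sum.inl '' (S : Set V)) =
      p * S.card - ((G.edgeFinset.filter (fun e => ∃ v ∈ S, v ∈ e)).card : ℝ) := by
  classical
  rw [payoff, Vpos_subdiv, Vneg_subdiv]
  have h1 : (Sum.inl '' (S : Set V) : Set (V ⊕ G.edgeSet)).ncard = S.card := by
    rw [Set.ncard_image_of_injective _ Sum.inl_injective, Set.ncard_coe_finset]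
  have h2 : (Sum.inr '' {e : G.edgeSet | ∃ v ∈ S, v ∈ (e : Sym2 V)} :
      Set (V ⊕ G.edgeSet)).ncard
      = (G.edgeFinset.filter (fun e => ∃ v ∈ S, v ∈ e)).card := by
    rw [Set.ncard_image_of_injective _ Sum.inr_injective]
    have : {e : G.edgeSet | ∃ v ∈ S, v ∈ (e : Sym2 V)} =
        ((Finset.univ.filter (fun e : G.edgeSet => ∃ v ∈ S, v ∈ (e : Sym2 V)) : Finset G.edgeSet) :
          Set G.edgeSet) := by
      ext e; simp
    rw [this, Set.ncard_coe_finset]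
    refine Finset.card_bij (fun e _ => (e : Sym2 V)) ?_ ?_ ?_
    · rintro ⟨e, he⟩ ha
      simp only [Finset.mem_filter, Finset.mem_univ, true_and] at ha
      simpa [SimpleGraph.mem_edgeFinset, he] using ha
    · rintro ⟨e1, h1⟩ _ ⟨e2, h2⟩ _ h
      simpa using h
    · intro e he
      simp only [Finset.mem_filter, SimpleGraph.mem_edgeFinset] at he
      exact ⟨⟨e, he.1⟩, by simpa using he.2, rfl⟩
  rw [h1, h2]; ring

lemma card_filter_mem_pair (S : Finset V) {a b : V} (hab : a ≠ b) :
    (S.filter (· ∈ s(a, b))).card =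
      (if a ∈ S then 1 else 0) + (if b ∈ S then 1 else 0) := by
  classical
  have h : S.filter (· ∈ s(a, b)) = S.filter (· = a) ∪ S.filter (· = b) := by
    rw [← Finset.filter_or]
    apply Finset.filter_congr
    intro x _
    simp [Sym2.mem_iff]
  rw [h, Finset.card_union_of_disjoint, Finset.filter_eq', Finset.filter_eq']
  · split_ifs <;> simp
  · rw [Finset.disjoint_filter]
    rintro x _ rfl rfl
    exact hab rfl

lemma handshake (S : Finset V) :
    (G.edgeFinset.filter (fun e => ∃ v ∈ S, v ∈ e)).card
      + (G.edgeFinset.filter (fun e => ∀ v ∈ e, v ∈ S)).card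
      = ∑ v ∈ S, G.degree v := by
  classical
  have hdeg : ∀ v : V, G.degree v = (G.edgeFinset.filter (v ∈ ·)).card := by
    intro v
    rw [← SimpleGraph.card_incidenceFinset_eq_degree, SimpleGraph.incidenceFinset_eq_filter]
  calc (G.edgeFinset.filter (fun e => ∃ v ∈ S, v ∈ e)).card
      + (G.edgeFinset.filter (fun e => ∀ v ∈ e, v ∈ S)).card
      = ∑ e ∈ G.edgeFinset, ((if (∃ v ∈ S, v ∈ e) then 1 else 0)
          + (if (∀ v ∈ e, v ∈ S) then 1 else 0)) := by
        rw [Finset.sum_add_distrib, ← Finset.card_filter, ← Finset.card_filter]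
    _ = ∑ e ∈ G.edgeFinset, (S.filter (· ∈ e)).card := by
        apply Finset.sum_congr rfl
        intro e he
        have hnd : ¬ e.IsDiag :=
          G.not_isDiag_of_mem_edgeSet (SimpleGraph.mem_edgeFinset.1 he)
        induction e with
        | _ a b =>
          have hab : a ≠ b := by simpa [Sym2.mk_isDiag_iff] using hnd
          rw [card_filter_mem_pair S hab]
          have e1 : (∃ v ∈ S, v ∈ s(a, b)) ↔ (a ∈ S ∨ b ∈ S) := by
            constructor
            · rintro ⟨v, hv, hve⟩
              rcases Sym2.mem_iff.1 hve with rfl | rfl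
              · exact Or.inl hv
              · exact Or.inr hv
            · rintro (h | h)
              · exact ⟨a, h, by simp⟩
              · exact ⟨b, h, by simp⟩
          have e2 : (∀ v ∈ s(a, b), v ∈ S) ↔ (a ∈ S ∧ b ∈ S) := by
            constructor
            · intro h; exact ⟨h a (by simp), h b (by simp)⟩
            · rintro ⟨h1, h2⟩ v hv
              rcases Sym2.mem_iff.1 hv with rfl | rfl <;> assumption
          rw [if_congr e1 rfl rfl, if_congr e2 rfl rfl]
          by_cases ha : a ∈ S <;> by_cases hb : b ∈ S <;> simp [ha, hb]
    _ = ∑ v ∈ S, G.degree v := by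
        rw [Finset.sum_congr rfl fun e _ => Finset.card_filter (· ∈ e) S]
        rw [Finset.sum_comm]
        apply Finset.sum_congr rfl
        intro v _
        rw [hdeg v, Finset.card_filter]

lemma card_sym2_offdiag (S : Finset V) :
    (S.sym2.filter (fun e => ¬ e.IsDiag)).card = S.card.choose 2 := by
  classical
  have hdiag : S.sym2.filter (fun e => e.IsDiag) = S.image Sym2.diag := by
    ext e
    simp only [Finset.mem_filter, Finset.mem_image]
    constructor
    · rintro ⟨he, hd⟩
      obtain ⟨a, rfl⟩ := (⟨e.diagElem hd, Sym2.diag_diagElem hd⟩ : ∃ a, Sym2.diag a = e)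
      exact ⟨a, Finset.diag_mem_sym2_iff.1 he, rfl⟩
    · rintro ⟨a, ha, rfl⟩
      exact ⟨Finset.diag_mem_sym2_iff.2 ha, Sym2.diag_isDiag a⟩
  have hcard : (S.sym2.filter (fun e => e.IsDiag)).card = S.card := by
    rw [hdiag, Finset.card_image_of_injective _ Sym2.diag_injective]
  have htot := Finset.card_filter_add_card_filter_not
    (s := S.sym2) (p := fun e => e.IsDiag)
  rw [Finset.card_sym2] at htot
  have hch : (S.card + 1).choose 2 = S.card + S.card.choose 2 := by
    rw [Nat.choose_succ_succ]
    simp [Nat.choose_one_right]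
  omega

lemma Ein_subset_offdiag (S : Finset V) :
    G.edgeFinset.filter (fun e => ∀ v ∈ e, v ∈ S) ⊆
      S.sym2.filter (fun e => ¬ e.IsDiag) := by
  intro e he
  rw [Finset.mem_filter] at he ⊢
  obtain ⟨heE, hall⟩ := he
  refine ⟨?_, G.not_isDiag_of_mem_edgeSet (SimpleGraph.mem_edgeFinset.1 heE)⟩
  induction e with
  | _ a b =>
    exact Finset.mk_mem_sym2_iff.2 ⟨hall a (by simp), hall b (by simp)⟩

end Aux

/-- A `d`-regular graph `G` (with `d ≥ k ≥ 2`) contains a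
`k`-clique if and only if the subdivided instance `G'` (with `q = 1`,
`p = d − (k−1)/2 + ε`, `0 < ε < 1/k²`) admits a seed set `S` of original
(accepting) nodes of size at most `k` with `π(S) > 0`. -/
theorem clique_iff_positive_budgeted_seed_set {V : Type*} [Fintype V]
    [DecidableEq V] (G : SimpleGraph V) [DecidableRel G.Adj] (d k : ℕ)
    (hreg : ∀ v, G.degree v = d) (hk : 2 ≤ k) (hkd : k ≤ d)
    (p ε : ℝ) (hε : 0 < ε) (hεk : ε < 1 / (k : ℝ) ^ 2)
    (hp : p = (d : ℝ) - ((k : ℝ) - 1) / 2 + ε) :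
    (∃ S : Finset V, S.card = k ∧ ∀ i ∈ S, ∀ j ∈ S, i ≠ j → G.Adj i j) ↔
    (∃ S : Finset V, S.card ≤ k ∧
      0 < payoff p 1 (subdiv G) (subdivAcc G) (Sum.inl '' (S : Set V))) := by
  classical
  constructor
  · -- clique ⇒ positive payoff
    rintro ⟨S, hcard, hclique⟩
    refine ⟨S, le_of_eq hcard, ?_⟩
    rw [payoff_subdiv]
    have hhs := handshake G S
    have hsum : ∑ v ∈ S, G.degree v = k * d := by
      rw [Finset.sum_congr rfl (fun v _ => hreg v), Finset.sum_const, smul_eq_mul, hcard]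
    have hEin : G.edgeFinset.filter (fun e => ∀ v ∈ e, v ∈ S) =
        S.sym2.filter (fun e => ¬ e.IsDiag) := by
      apply Finset.Subset.antisymm (Ein_subset_offdiag G S)
      intro e he
      rw [Finset.mem_filter] at he ⊢
      revert he
      induction e using Sym2.ind with
      | _ a b =>
        rintro ⟨hes, hnd⟩
        obtain ⟨ha, hb⟩ := Finset.mk_mem_sym2_iff.1 hes
        have hab : a ≠ b := by simpa [Sym2.mk_isDiag_iff] using hnd
        have hadj := hclique a ha b hb hab
        refine ⟨by simp [hadj], ?_⟩
        intro v hv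
        rcases Sym2.mem_iff.1 hv with rfl | rfl <;> assumption
    have hEcard : (G.edgeFinset.filter (fun e => ∀ v ∈ e, v ∈ S)).card = k.choose 2 := by
      rw [hEin, card_sym2_offdiag, hcard]
    rw [hEcard, hsum] at hhs
    have hk0 : (0:ℝ) < k := by
      have : (0:ℕ) < k := by omega
      exact_mod_cast this
    have hN : ((G.edgeFinset.filter (fun e => ∃ v ∈ S, v ∈ e)).card : ℝ)
        = (k : ℝ) * d - (k : ℝ) * ((k:ℝ) - 1) / 2 := by
      have hc := congrArg (Nat.cast : ℕ → ℝ) hhs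
      push_cast [Nat.cast_choose_two] at hc
      linarith
    rw [hcard, hN, hp]
    nlinarith [mul_pos hε hk0]
  · -- positive payoff ⇒ clique
    rintro ⟨S, hcard, hpos⟩
    rw [payoff_subdiv] at hpos
    have hhs := handshake G S
    have hsum : ∑ v ∈ S, G.degree v = S.card * d := by
      rw [Finset.sum_congr rfl (fun v _ => hreg v), Finset.sum_const, smul_eq_mul]
    rw [hsum] at hhs
    set N := (G.edgeFinset.filter (fun e => ∃ v ∈ S, v ∈ e)).card with hNdef
    set I := (G.edgeFinset.filter (fun e => ∀ v ∈ e, v ∈ S)).card with hIdef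
    have hIle : I ≤ S.card.choose 2 :=
      (card_sym2_offdiag S) ▸ Finset.card_le_card (Ein_subset_offdiag G S)
    have hk0 : (0:ℝ) < k := by
      have : (0:ℕ) < k := by omega
      exact_mod_cast this
    have hk2 : (2:ℝ) ≤ k := by exact_mod_cast hk
    have hNr : (N:ℝ) = (S.card : ℝ) * d - I := by
      have hc := congrArg (Nat.cast : ℕ → ℝ) hhs
      push_cast at hc
      linarith
    have hIgt : (S.card:ℝ) * (((k:ℝ)-1)/2 - ε) < (I:ℝ) := by
      rw [hNr, hp] at hpos
      nlinarith
    have hIle' : (I:ℝ) ≤ (S.card:ℝ) * ((S.card:ℝ) - 1) / 2 := by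
      calc (I:ℝ) ≤ (S.card.choose 2 : ℝ) := by exact_mod_cast hIle
        _ = (S.card:ℝ) * ((S.card:ℝ) - 1) / 2 := by rw [Nat.cast_choose_two]
    have hεhalf : ε < 1/2 := by
      have h4 : (4:ℝ) ≤ (k:ℝ)^2 := by nlinarith
      have : 1 / (k:ℝ)^2 ≤ 1/4 := one_div_le_one_div_of_le (by norm_num) h4
      linarith
    have hspos : 0 < S.card := by
      rcases Nat.eq_zero_or_pos S.card with h0 | h
      · exfalso
        have hI0 : I = 0 := by
          have := hIle
          rw [h0] at this
          simpa using this
        rw [hI0, h0] at hIgt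
        norm_num at hIgt
      · exact h
    have hsR : (0:ℝ) < S.card := by exact_mod_cast hspos
    have hscard : S.card = k := by
      by_contra hne
      have hsk : S.card + 1 ≤ k := by omega
      have hs1 : (S.card:ℝ) ≤ (k:ℝ) - 1 := by
        have h' : ((S.card:ℕ):ℝ) + 1 ≤ (k:ℝ) := by exact_mod_cast hsk
        linarith
      have hA : (S.card:ℝ) * (((k:ℝ)-1)/2 - ε) < (S.card:ℝ) * ((S.card:ℝ) - 1) / 2 :=
        lt_of_lt_of_le hIgt hIle'
      have hB : (S.card:ℝ) * ε < (S.card:ℝ) * (1/2) :=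
        mul_lt_mul_of_pos_left hεhalf hsR
      have hC : (0:ℝ) ≤ ((k:ℝ) - 1 - S.card) * S.card :=
        mul_nonneg (by linarith) hsR.le
      nlinarith
    have hεk1 : ε * k < 1 := by
      have h1 : ε * (k:ℝ)^2 < 1 := by
        have := mul_lt_mul_of_pos_right hεk (by positivity : (0:ℝ) < (k:ℝ)^2)
        rw [one_div_mul_cancel (by positivity)] at this
        exact this
      nlinarith
    have hIge : k.choose 2 ≤ I := by
      have h1 : ((k.choose 2 : ℕ):ℝ) < (I:ℝ) + 1 := by
        rw [Nat.cast_choose_two]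
        rw [hscard] at hIgt
        nlinarith
      have h2 : k.choose 2 < I + 1 := by exact_mod_cast h1
      omega
    have hIeq : I = k.choose 2 := le_antisymm (hscard ▸ hIle) hIge
    have hEin : G.edgeFinset.filter (fun e => ∀ v ∈ e, v ∈ S) =
        S.sym2.filter (fun e => ¬ e.IsDiag) := by
      apply Finset.eq_of_subset_of_card_le (Ein_subset_offdiag G S)
      rw [card_sym2_offdiag, hscard, ← hIeq]
    refine ⟨S, hscard, ?_⟩
    intro a ha b hb hab
    have hmem : s(a, b) ∈ G.edgeFinset.filter (fun e => ∀ v ∈ e, v ∈ S) := by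
      rw [hEin, Finset.mem_filter]
      exact ⟨Finset.mk_mem_sym2_iff.2 ⟨ha, hb⟩, by simpa [Sym2.mk_isDiag_iff] using hab⟩
    have := (Finset.mem_filter.1 hmem).1
    simpa using this
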